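/- arXiv:2505.22529 — 2 statements merged into one kernel-verified Lean document; each statement's English description precedes it below -/
import Mathlib

section
/- Let F : (0,∞) → ℝ^N be differentiable with 0 < F_i(t) < 1/α for all i and t, solving the spatially homogeneous system F′(t) = Q^α(F(t)). Then (i) for every collision invariant φ ∈ ℝ^N the moment t ↦ ⟨φ, F(t)⟩ is constant, and (ii) the H-functional H[F](t) = Σ_{i=1}^N μ(F_i(t)) is differentiable with d/dt H[F](t) = ⟨log(F(t)/Ψ_α(F(t))), Q^α(F(t))⟩ ≤ 0, so H[F] is non-increasing. -/
open Real Finset Filter Set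

noncomputable def Psi (α y : ℝ) : ℝ :=
  (1 - α * y) ^ α * (1 + (1 - α) * y) ^ (1 - α)

noncomputable def Qop {N : ℕ} (α : ℝ) (Γ : Fin N → Fin N → Fin N → Fin N → ℝ)
    (F : Fin N → ℝ) : Fin N → ℝ := fun i =>
  ∑ j, ∑ k, ∑ l, Γ i j k l *
    (F k * F l * Psi α (F i) * Psi α (F j) - F i * F j * Psi α (F k) * Psi α (F l))

def dotN {N : ℕ} (u v : Fin N → ℝ) : ℝ := ∑ i, u i * v i

def GammaOK {N d : ℕ} (p : Fin N → Fin d → ℝ)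
    (Γ : Fin N → Fin N → Fin N → Fin N → ℝ) : Prop :=
  (∀ i j k l, 0 ≤ Γ i j k l) ∧
  (∀ i j k l, Γ i j k l = Γ j i k l) ∧
  (∀ i j k l, Γ i j k l = Γ k l i j) ∧
  (∀ i j k l, Γ i j k l ≠ 0 →
    (∀ m, p i m + p j m = p k m + p l m) ∧
    (∑ m, (p i m) ^ 2) + (∑ m, (p j m) ^ 2) = (∑ m, (p k m) ^ 2) + (∑ m, (p l m) ^ 2))

def IsCollInv {N : ℕ} (Γ : Fin N → Fin N → Fin N → Fin N → ℝ) (φ : Fin N → ℝ) : Prop :=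
  ∀ i j k l, Γ i j k l ≠ 0 → φ i + φ j = φ k + φ l

def IsNormal {N d : ℕ} (p : Fin N → Fin d → ℝ)
    (Γ : Fin N → Fin N → Fin N → Fin N → ℝ) : Prop :=
  ∀ φ : Fin N → ℝ, IsCollInv Γ φ →
    ∃ (a c : ℝ) (b : Fin d → ℝ), ∀ i, φ i = a + (∑ m, b m * p i m) + c * ∑ m, (p i m) ^ 2

def IsEquilib {N d : ℕ} (α : ℝ) (p : Fin N → Fin d → ℝ) (P : Fin N → ℝ) : Prop :=
  (∀ i, 0 < P i ∧ P i < 1 / α) ∧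
  ∃ (K : ℝ) (b : Fin d → ℝ) (c : ℝ), 0 < K ∧
    ∀ i, P i / Psi α (P i) = K * Real.exp (-(∑ m, b m * p i m) - c * ∑ m, (p i m) ^ 2)

noncomputable def muF (α y : ℝ) : ℝ :=
  y * Real.log y + (1 - α * y) * Real.log (1 - α * y)
    - (1 + (1 - α) * y) * Real.log (1 + (1 - α) * y)

noncomputable def Rfun {N : ℕ} (α : ℝ) (P : Fin N → ℝ) (i : Fin N) : ℝ :=
  P i * (1 - α * P i) * (1 + (1 - α) * P i)

noncomputable def Pcoef {N : ℕ} (α : ℝ) (P : Fin N → ℝ) (i j k l : Fin N) : ℝ :=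
  P i * P j * Psi α (P k) * Psi α (P l) / Real.sqrt (Rfun α P i)

noncomputable def Lop {N : ℕ} (α : ℝ) (Γ : Fin N → Fin N → Fin N → Fin N → ℝ)
    (P : Fin N → ℝ) (f : Fin N → ℝ) : Fin N → ℝ := fun i =>
  ∑ j, ∑ k, ∑ l, Γ i j k l / Real.sqrt (Rfun α P i) *
    (Pcoef α P i j k l * f i + Pcoef α P j i k l * f j
      - Pcoef α P k l i j * f k - Pcoef α P l k i j * f l)

lemma sum_swap4 {n : ℕ} (f : Fin n → Fin n → Fin n → Fin n → ℝ) :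
    ∑ i, ∑ j, ∑ k, ∑ l, f i j k l = ∑ i, ∑ j, ∑ k, ∑ l, f k l i j := by
  rw [show (∑ i, ∑ j, ∑ k, ∑ l, f i j k l)
      = ∑ q : (Fin n × Fin n) × Fin n × Fin n, f q.1.1 q.1.2 q.2.1 q.2.2 by
    simp [Fintype.sum_prod_type]]
  rw [show (∑ i, ∑ j, ∑ k, ∑ l, f k l i j)
      = ∑ q : (Fin n × Fin n) × Fin n × Fin n, f q.2.1 q.2.2 q.1.1 q.1.2 by
    simp [Fintype.sum_prod_type]]
  exact Fintype.sum_equiv (Equiv.prodComm _ _) _ _ (fun q => rfl)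

lemma sum_swap_inner {n : ℕ} (f : Fin n → Fin n → Fin n → Fin n → ℝ) :
    ∑ i, ∑ j, ∑ k, ∑ l, f i j k l = ∑ i, ∑ j, ∑ k, ∑ l, f j i k l :=
  Finset.sum_comm

lemma symmetrize {N : ℕ} (α : ℝ) (Γ : Fin N → Fin N → Fin N → Fin N → ℝ)
    (h1 : ∀ i j k l, Γ i j k l = Γ j i k l) (h2 : ∀ i j k l, Γ i j k l = Γ k l i j)
    (φ P : Fin N → ℝ) :
    4 * dotN φ (Qop α Γ P) = ∑ i, ∑ j, ∑ k, ∑ l,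
      Γ i j k l * ((φ i + φ j - φ k - φ l) *
      (P k * P l * Psi α (P i) * Psi α (P j) - P i * P j * Psi α (P k) * Psi α (P l))) := by
  set D : Fin N → Fin N → Fin N → Fin N → ℝ := fun i j k l =>
    P k * P l * Psi α (P i) * Psi α (P j) - P i * P j * Psi α (P k) * Psi α (P l) with hD
  have hT1 : dotN φ (Qop α Γ P) = ∑ i, ∑ j, ∑ k, ∑ l, Γ i j k l * φ i * D i j k l := by
    simp only [dotN, Qop, Finset.mul_sum, hD]
    exact Finset.sum_congr rfl fun i _ => Finset.sum_congr rfl fun j _ =>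
      Finset.sum_congr rfl fun k _ => Finset.sum_congr rfl fun l _ => by ring
  have hT2 : (∑ i, ∑ j, ∑ k, ∑ l, Γ i j k l * φ j * D i j k l)
      = ∑ i, ∑ j, ∑ k, ∑ l, Γ i j k l * φ i * D i j k l := by
    rw [sum_swap_inner (fun i j k l => Γ i j k l * φ j * D i j k l)]
    exact Finset.sum_congr rfl fun i _ => Finset.sum_congr rfl fun j _ =>
      Finset.sum_congr rfl fun k _ => Finset.sum_congr rfl fun l _ => by
        rw [← h1 i j k l]; simp only [hD]; ring
  have hT3 : (∑ i, ∑ j, ∑ k, ∑ l, Γ i j k l * φ k * D i j k l)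
      = -∑ i, ∑ j, ∑ k, ∑ l, Γ i j k l * φ i * D i j k l := by
    rw [sum_swap4 (fun i j k l => Γ i j k l * φ k * D i j k l)]
    have e : ∀ i j k l, Γ k l i j * φ i * D k l i j = -(Γ i j k l * φ i * D i j k l) :=
      fun i j k l => by rw [← h2 i j k l]; simp only [hD]; ring
    simp only [e, Finset.sum_neg_distrib]
  have hT4 : (∑ i, ∑ j, ∑ k, ∑ l, Γ i j k l * φ l * D i j k l)
      = -∑ i, ∑ j, ∑ k, ∑ l, Γ i j k l * φ i * D i j k l := by
    rw [sum_swap4 (fun i j k l => Γ i j k l * φ l * D i j k l)]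
    have e : ∀ i j k l, Γ k l i j * φ j * D k l i j = -(Γ i j k l * φ j * D i j k l) :=
      fun i j k l => by rw [← h2 i j k l]; simp only [hD]; ring
    simp only [e, Finset.sum_neg_distrib, hT2]
  have expand : (∑ i, ∑ j, ∑ k, ∑ l, Γ i j k l * ((φ i + φ j - φ k - φ l) * D i j k l))
      = (∑ i, ∑ j, ∑ k, ∑ l, Γ i j k l * φ i * D i j k l)
      + (∑ i, ∑ j, ∑ k, ∑ l, Γ i j k l * φ j * D i j k l)
      - (∑ i, ∑ j, ∑ k, ∑ l, Γ i j k l * φ k * D i j k l)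
      - (∑ i, ∑ j, ∑ k, ∑ l, Γ i j k l * φ l * D i j k l) := by
    simp only [← Finset.sum_add_distrib, ← Finset.sum_sub_distrib]
    exact Finset.sum_congr rfl fun i _ => Finset.sum_congr rfl fun j _ =>
      Finset.sum_congr rfl fun k _ => Finset.sum_congr rfl fun l _ => by ring
  rw [hT1]
  simp only [hD] at expand hT2 hT3 hT4 ⊢
  linarith [expand, hT2, hT3, hT4]

lemma Psi_pos {α y : ℝ} (hα0 : 0 < α) (hα1 : α < 1) (hy : 0 < y) (hy' : y < 1 / α) :
    0 < Psi α y := by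
  have h1 : 0 < 1 - α * y := by
    have : α * y < α * (1/α) := by exact mul_lt_mul_of_pos_left hy' hα0
    rw [mul_one_div_cancel (ne_of_gt hα0)] at this
    linarith
  have h2 : 0 < 1 + (1 - α) * y := by nlinarith
  exact mul_pos (Real.rpow_pos_of_pos h1 _) (Real.rpow_pos_of_pos h2 _)

lemma aux_bounds {α y : ℝ} (hα0 : 0 < α) (hα1 : α < 1) (hy : 0 < y) (hy' : y < 1 / α) :
    0 < 1 - α * y ∧ 0 < 1 + (1 - α) * y := by
  constructor
  · have : α * y < α * (1/α) := mul_lt_mul_of_pos_left hy' hα0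
    rw [mul_one_div_cancel (ne_of_gt hα0)] at this; linarith
  · nlinarith

lemma log_div_Psi {α y : ℝ} (hα0 : 0 < α) (hα1 : α < 1) (hy : 0 < y) (hy' : y < 1 / α) :
    Real.log (y / Psi α y)
      = Real.log y - α * Real.log (1 - α * y) - (1 - α) * Real.log (1 + (1 - α) * y) := by
  obtain ⟨h1, h2⟩ := aux_bounds hα0 hα1 hy hy'
  rw [Real.log_div (ne_of_gt hy) (ne_of_gt (Psi_pos hα0 hα1 hy hy')), Psi,
    Real.log_mul (ne_of_gt (Real.rpow_pos_of_pos h1 _)) (ne_of_gt (Real.rpow_pos_of_pos h2 _)),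
    Real.log_rpow h1, Real.log_rpow h2]
  ring

lemma xlogx_deriv {z : ℝ} (hz : 0 < z) :
    HasDerivAt (fun y => y * Real.log y) (Real.log z + 1) z := by
  have := (hasDerivAt_id z).fun_mul (Real.hasDerivAt_log (ne_of_gt hz))
  refine this.congr_deriv ?_
  simp [ne_of_gt hz]

lemma muF_hasDerivAt {α y : ℝ} (hα0 : 0 < α) (hα1 : α < 1) (hy : 0 < y) (hy' : y < 1 / α) :
    HasDerivAt (muF α) (Real.log (y / Psi α y)) y := by
  obtain ⟨h1, h2⟩ := aux_bounds hα0 hα1 hy hy'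
  have d1 : HasDerivAt (fun y : ℝ => 1 - α * y) (-α) y := by
    simpa using ((hasDerivAt_id y).const_mul α).const_sub 1
  have d2 : HasDerivAt (fun y : ℝ => 1 + (1 - α) * y) (1 - α) y := by
    simpa using ((hasDerivAt_id y).const_mul (1 - α)).const_add 1
  have h1' : HasDerivAt (fun y : ℝ => (1 - α * y) * Real.log (1 - α * y))
      ((Real.log (1 - α * y) + 1) * (-α)) y := by
        have := (xlogx_deriv h1).comp y d1; exact this
  have h2' : HasDerivAt (fun y : ℝ => (1 + (1 - α) * y) * Real.log (1 + (1 - α) * y))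
      ((Real.log (1 + (1 - α) * y) + 1) * (1 - α)) y := by
        have := (xlogx_deriv h2).comp y d2; exact this
  have := ((xlogx_deriv hy).fun_add h1').fun_sub h2'
  rw [log_div_Psi hα0 hα1 hy hy']
  refine this.congr_deriv ?_
  ring

lemma dot_collinv_zero {N : ℕ} (α : ℝ) (Γ : Fin N → Fin N → Fin N → Fin N → ℝ)
    (h1 : ∀ i j k l, Γ i j k l = Γ j i k l) (h2 : ∀ i j k l, Γ i j k l = Γ k l i j)
    (φ : Fin N → ℝ) (hφ : ∀ i j k l, Γ i j k l ≠ 0 → φ i + φ j = φ k + φ l)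
    (P : Fin N → ℝ) : dotN φ (Qop α Γ P) = 0 := by
  have h := symmetrize α Γ h1 h2 φ P
  have hz : (∑ i, ∑ j, ∑ k, ∑ l, Γ i j k l * ((φ i + φ j - φ k - φ l) *
      (P k * P l * Psi α (P i) * Psi α (P j) - P i * P j * Psi α (P k) * Psi α (P l)))) = 0 := by
    refine Finset.sum_eq_zero fun i _ => Finset.sum_eq_zero fun j _ =>
      Finset.sum_eq_zero fun k _ => Finset.sum_eq_zero fun l _ => ?_
    by_cases hne : Γ i j k l = 0
    · rw [hne]; ring
    · have := hφ i j k l hne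
      have : φ i + φ j - φ k - φ l = 0 := by linarith
      rw [this]; ring
  rw [hz] at h; linarith

lemma dot_entropy_nonpos {N : ℕ} {α : ℝ} (hα0 : 0 < α) (hα1 : α < 1)
    (Γ : Fin N → Fin N → Fin N → Fin N → ℝ)
    (h0 : ∀ i j k l, 0 ≤ Γ i j k l)
    (h1 : ∀ i j k l, Γ i j k l = Γ j i k l) (h2 : ∀ i j k l, Γ i j k l = Γ k l i j)
    (P : Fin N → ℝ) (hP : ∀ i, 0 < P i ∧ P i < 1 / α) :
    dotN (fun i => Real.log (P i / Psi α (P i))) (Qop α Γ P) ≤ 0 := by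
  have hΨ : ∀ i, 0 < Psi α (P i) := fun i => Psi_pos hα0 hα1 (hP i).1 (hP i).2
  have h := symmetrize α Γ h1 h2 (fun i => Real.log (P i / Psi α (P i))) P
  have hz : (∑ i, ∑ j, ∑ k, ∑ l, Γ i j k l *
      ((Real.log (P i / Psi α (P i)) + Real.log (P j / Psi α (P j))
        - Real.log (P k / Psi α (P k)) - Real.log (P l / Psi α (P l))) *
      (P k * P l * Psi α (P i) * Psi α (P j) - P i * P j * Psi α (P k) * Psi α (P l)))) ≤ 0 := by
    refine Finset.sum_nonpos fun i _ => Finset.sum_nonpos fun j _ =>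
      Finset.sum_nonpos fun k _ => Finset.sum_nonpos fun l _ => ?_
    set A : ℝ := P k * P l * Psi α (P i) * Psi α (P j) with hA
    set B : ℝ := P i * P j * Psi α (P k) * Psi α (P l) with hB
    have hApos : 0 < A := by
      have := (hP k).1; have := (hP l).1
      exact mul_pos (mul_pos (mul_pos (hP k).1 (hP l).1) (hΨ i)) (hΨ j)
    have hBpos : 0 < B :=
      mul_pos (mul_pos (mul_pos (hP i).1 (hP j).1) (hΨ k)) (hΨ l)
    have hlog : Real.log (P i / Psi α (P i)) + Real.log (P j / Psi α (P j))
        - Real.log (P k / Psi α (P k)) - Real.log (P l / Psi α (P l))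
        = Real.log B - Real.log A := by
      have e : ∀ m : Fin N, Real.log (P m / Psi α (P m)) = Real.log (P m) - Real.log (Psi α (P m)) :=
        fun m => Real.log_div (ne_of_gt (hP m).1) (ne_of_gt (hΨ m))
      rw [e i, e j, e k, e l, hA, hB,
        Real.log_mul (ne_of_gt (mul_pos (mul_pos (hP k).1 (hP l).1) (hΨ i))) (ne_of_gt (hΨ j)),
        Real.log_mul (ne_of_gt (mul_pos (hP k).1 (hP l).1)) (ne_of_gt (hΨ i)),
        Real.log_mul (ne_of_gt (hP k).1) (ne_of_gt (hP l).1),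
        Real.log_mul (ne_of_gt (mul_pos (mul_pos (hP i).1 (hP j).1) (hΨ k))) (ne_of_gt (hΨ l)),
        Real.log_mul (ne_of_gt (mul_pos (hP i).1 (hP j).1)) (ne_of_gt (hΨ k)),
        Real.log_mul (ne_of_gt (hP i).1) (ne_of_gt (hP j).1)]
      ring
    rw [hlog]
    have key : (Real.log B - Real.log A) * (A - B) ≤ 0 := by
      rcases le_total A B with hab | hab
      · have := Real.log_le_log hApos hab
        have h1' : 0 ≤ Real.log B - Real.log A := by linarith
        have h2' : A - B ≤ 0 := by linarith
        exact mul_nonpos_of_nonneg_of_nonpos h1' h2'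
      · have := Real.log_le_log hBpos hab
        have h1' : Real.log B - Real.log A ≤ 0 := by linarith
        have h2' : 0 ≤ A - B := by linarith
        exact mul_nonpos_of_nonpos_of_nonneg h1' h2'
    exact mul_nonpos_of_nonneg_of_nonpos (h0 i j k l) key
  linarith

/-- conservation of moments and monotonicity of the H-functional for
the spatially homogeneous system. -/
theorem stmt14 {N d : ℕ} (hN : 0 < N) (hd : 0 < d)
    (α : ℝ) (hα0 : 0 < α) (hα1 : α < 1)
    (p : Fin N → Fin d → ℝ) (Γ : Fin N → Fin N → Fin N → Fin N → ℝ)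
    (hΓ : GammaOK p Γ)
    (F F' : ℝ → Fin N → ℝ)
    (hpos : ∀ t ∈ Set.Ioi (0 : ℝ), ∀ i, 0 < F t i ∧ F t i < 1 / α)
    (hdiff : ∀ t ∈ Set.Ioi (0 : ℝ), ∀ i, HasDerivAt (fun s => F s i) (F' t i) t)
    (heq : ∀ t ∈ Set.Ioi (0 : ℝ), ∀ i, F' t i = Qop α Γ (F t) i) :
    (∀ φ : Fin N → ℝ, IsCollInv Γ φ → ∀ t ∈ Set.Ioi (0 : ℝ), ∀ s ∈ Set.Ioi (0 : ℝ),
      dotN φ (F t) = dotN φ (F s)) ∧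
    (∀ t ∈ Set.Ioi (0 : ℝ),
      HasDerivAt (fun s => ∑ i, muF α (F s i))
        (dotN (fun i => Real.log (F t i / Psi α (F t i))) (Qop α Γ (F t))) t ∧
      dotN (fun i => Real.log (F t i / Psi α (F t i))) (Qop α Γ (F t)) ≤ 0) ∧
    AntitoneOn (fun t => ∑ i, muF α (F t i)) (Set.Ioi 0) := by
  obtain ⟨hΓ0, hΓ1, hΓ2, _⟩ := hΓ
  -- the moment has zero derivative
  have hmom : ∀ φ : Fin N → ℝ, IsCollInv Γ φ → ∀ t ∈ Set.Ioi (0 : ℝ),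
      HasDerivAt (fun s => dotN φ (F s)) 0 t := by
    intro φ hφ t ht
    have h : HasDerivAt (fun s => ∑ i, φ i * F s i) (∑ i, φ i * F' t i) t :=
      HasDerivAt.fun_sum (fun i _ => (hdiff t ht i).const_mul (φ i))
    have hz : (∑ i, φ i * F' t i) = 0 := by
      have e : (∑ i, φ i * F' t i) = dotN φ (Qop α Γ (F t)) := by
        unfold dotN
        exact Finset.sum_congr rfl fun i _ => by rw [heq t ht i]
      rw [e, dot_collinv_zero α Γ hΓ1 hΓ2 φ hφ (F t)]
    rw [hz] at h
    exact h
  -- the H functional derivative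
  have hH : ∀ t ∈ Set.Ioi (0 : ℝ),
      HasDerivAt (fun s => ∑ i, muF α (F s i))
        (dotN (fun i => Real.log (F t i / Psi α (F t i))) (Qop α Γ (F t))) t := by
    intro t ht
    have h : HasDerivAt (fun s => ∑ i, muF α (F s i))
        (∑ i, Real.log (F t i / Psi α (F t i)) * F' t i) t :=
      HasDerivAt.fun_sum (fun i _ =>
        by
          have := (muF_hasDerivAt hα0 hα1 (hpos t ht i).1 (hpos t ht i).2).comp t (hdiff t ht i)
          exact this)
    have e : dotN (fun i => Real.log (F t i / Psi α (F t i))) (Qop α Γ (F t))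
        = ∑ i, Real.log (F t i / Psi α (F t i)) * F' t i := by
      unfold dotN
      exact Finset.sum_congr rfl fun i _ => by rw [heq t ht i]
    rw [e]
    exact h
  have hHnp : ∀ t ∈ Set.Ioi (0 : ℝ),
      dotN (fun i => Real.log (F t i / Psi α (F t i))) (Qop α Γ (F t)) ≤ 0 := fun t ht =>
    dot_entropy_nonpos hα0 hα1 Γ hΓ0 hΓ1 hΓ2 (F t) (hpos t ht)
  refine ⟨?_, fun t ht => ⟨hH t ht, hHnp t ht⟩, ?_⟩
  · intro φ hφ t ht s hs
    have hc : ContinuousOn (fun s => dotN φ (F s)) (Set.Ioi 0) :=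
      fun x hx => ((hmom φ hφ x hx).continuousAt).continuousWithinAt
    have hdiffOn : DifferentiableOn ℝ (fun s => dotN φ (F s)) (interior (Set.Ioi (0:ℝ))) := by
      rw [interior_Ioi]
      exact fun x hx => (hmom φ hφ x hx).differentiableAt.differentiableWithinAt
    have hderiv0 : ∀ x ∈ interior (Set.Ioi (0:ℝ)), deriv (fun s => dotN φ (F s)) x = 0 := by
      rw [interior_Ioi]
      exact fun x hx => (hmom φ hφ x hx).deriv
    have hmono : MonotoneOn (fun s => dotN φ (F s)) (Set.Ioi 0) :=
      monotoneOn_of_deriv_nonneg (convex_Ioi 0) hc hdiffOn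
        (fun x hx => le_of_eq (hderiv0 x hx).symm)
    have hanti : AntitoneOn (fun s => dotN φ (F s)) (Set.Ioi 0) :=
      antitoneOn_of_deriv_nonpos (convex_Ioi 0) hc hdiffOn
        (fun x hx => le_of_eq (hderiv0 x hx))
    rcases le_total t s with h | h
    · exact le_antisymm (hmono ht hs h) (hanti ht hs h)
    · exact le_antisymm (hanti hs ht h) (hmono hs ht h)
  · have hc : ContinuousOn (fun t => ∑ i, muF α (F t i)) (Set.Ioi 0) :=
      fun x hx => ((hH x hx).continuousAt).continuousWithinAt
    have hdiffOn : DifferentiableOn ℝ (fun t => ∑ i, muF α (F t i))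
        (interior (Set.Ioi (0:ℝ))) := by
      rw [interior_Ioi]
      exact fun x hx => (hH x hx).differentiableAt.differentiableWithinAt
    refine antitoneOn_of_deriv_nonpos (convex_Ioi 0) hc hdiffOn ?_
    rw [interior_Ioi]
    intro x hx
    rw [(hH x hx).deriv]
    exact hHnp x hx
end

section
/- (Weak form of the linearized collision operator.) For all vectors f, g ∈ ℝ^N, ⟨g, Lf⟩ = (1/4) Σ_{i,j,k,l=1}^N Γ_{ij}^{kl} P_i P_j Ψ_α(P_k) Ψ_α(P_l) (f_i/R_i^{1/2} + f_j/R_j^{1/2} − f_k/R_k^{1/2} − f_l/R_l^{1/2}) (g_i/R_i^{1/2} + g_j/R_j^{1/2} − g_k/R_k^{1/2} − g_l/R_l^{1/2}). -/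
open Real Finset Filter Set

private lemma sum4_swap12 {N : ℕ} (F : Fin N → Fin N → Fin N → Fin N → ℝ) :
    (∑ i, ∑ j, ∑ k, ∑ l, F i j k l) = ∑ i, ∑ j, ∑ k, ∑ l, F j i k l :=
  Finset.sum_comm

private lemma sum4_pairswap {N : ℕ} (F : Fin N → Fin N → Fin N → Fin N → ℝ) :
    (∑ i, ∑ j, ∑ k, ∑ l, F i j k l) = ∑ i, ∑ j, ∑ k, ∑ l, F k l i j := by
  calc (∑ i, ∑ j, ∑ k, ∑ l, F i j k l)
      = ∑ i, ∑ k, ∑ j, ∑ l, F i j k l :=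
        Finset.sum_congr rfl fun i _ => Finset.sum_comm
    _ = ∑ k, ∑ i, ∑ j, ∑ l, F i j k l := Finset.sum_comm
    _ = ∑ k, ∑ i, ∑ l, ∑ j, F i j k l :=
        Finset.sum_congr rfl fun k _ => Finset.sum_congr rfl fun i _ => Finset.sum_comm
    _ = ∑ k, ∑ l, ∑ i, ∑ j, F i j k l :=
        Finset.sum_congr rfl fun k _ => Finset.sum_comm

private lemma weak_form_abstract {N : ℕ} (W : Fin N → Fin N → Fin N → Fin N → ℝ)
    (u v : Fin N → ℝ)
    (hW1 : ∀ i j k l, W j i k l = W i j k l)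
    (hW3 : ∀ i j k l, W k l i j = W i j k l) :
    (∑ i, ∑ j, ∑ k, ∑ l, W i j k l * ((u i + u j - u k - u l) * v i)) =
      (1 / 4) * ∑ i, ∑ j, ∑ k, ∑ l,
        W i j k l * (u i + u j - u k - u l) * (v i + v j - v k - v l) := by
  set D : Fin N → Fin N → Fin N → Fin N → ℝ := fun i j k l => u i + u j - u k - u l with hD
  have hD1 : ∀ i j k l, D j i k l = D i j k l := by intros; simp only [hD]; ring
  have hD3 : ∀ i j k l, D k l i j = -D i j k l := by intros; simp only [hD]; ring
  set T : ℝ := ∑ i, ∑ j, ∑ k, ∑ l, W i j k l * (D i j k l * v i) with hT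
  have hT2 : (∑ i, ∑ j, ∑ k, ∑ l, W i j k l * (D i j k l * v j)) = T := by
    rw [sum4_swap12 (fun i j k l => W i j k l * (D i j k l * v j))]
    refine Finset.sum_congr rfl fun i _ => Finset.sum_congr rfl fun j _ =>
      Finset.sum_congr rfl fun k _ => Finset.sum_congr rfl fun l _ => ?_
    rw [hW1, hD1]
  have hT3 : (∑ i, ∑ j, ∑ k, ∑ l, W i j k l * (D i j k l * v k)) = -T := by
    rw [sum4_pairswap (fun i j k l => W i j k l * (D i j k l * v k))]
    have : ∀ i j k l : Fin N, W k l i j * (D k l i j * v i)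
        = -(W i j k l * (D i j k l * v i)) := by
      intro i j k l; rw [hW3, hD3]; ring
    simp only [this, Finset.sum_neg_distrib]
    rfl
  have hT4 : (∑ i, ∑ j, ∑ k, ∑ l, W i j k l * (D i j k l * v l)) = -T := by
    rw [sum4_pairswap (fun i j k l => W i j k l * (D i j k l * v l))]
    have : ∀ i j k l : Fin N, W k l i j * (D k l i j * v j)
        = -(W i j k l * (D i j k l * v j)) := by
      intro i j k l; rw [hW3, hD3]; ring
    simp only [this, Finset.sum_neg_distrib]
    rw [hT2]
  have expand : (∑ i, ∑ j, ∑ k, ∑ l, W i j k l * D i j k l * (v i + v j - v k - v l))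
      = (∑ i, ∑ j, ∑ k, ∑ l, W i j k l * (D i j k l * v i))
        + (∑ i, ∑ j, ∑ k, ∑ l, W i j k l * (D i j k l * v j))
        - (∑ i, ∑ j, ∑ k, ∑ l, W i j k l * (D i j k l * v k))
        - (∑ i, ∑ j, ∑ k, ∑ l, W i j k l * (D i j k l * v l)) := by
    have : ∀ i j k l : Fin N, W i j k l * D i j k l * (v i + v j - v k - v l)
        = W i j k l * (D i j k l * v i) + W i j k l * (D i j k l * v j)
          - W i j k l * (D i j k l * v k) - W i j k l * (D i j k l * v l) := by
      intros; ring
    simp only [this, Finset.sum_add_distrib, Finset.sum_sub_distrib]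
  have hgoal : (∑ i, ∑ j, ∑ k, ∑ l, W i j k l * D i j k l * (v i + v j - v k - v l))
      = 4 * T := by
    rw [expand, hT2, hT3, hT4]; ring
  show T = (1 / 4) * ∑ i, ∑ j, ∑ k, ∑ l, W i j k l * D i j k l * (v i + v j - v k - v l)
  rw [hgoal]; ring

/-- Lemma 2: weak form of the linearized collision operator. -/
theorem stmt17 {N d : ℕ} (hN : 0 < N) (hd : 0 < d)
    (α : ℝ) (hα0 : 0 < α) (hα1 : α < 1)
    (p : Fin N → Fin d → ℝ) (Γ : Fin N → Fin N → Fin N → Fin N → ℝ)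
    (hΓ : GammaOK p Γ)
    (P : Fin N → ℝ) (hP : IsEquilib α p P)
    (f g : Fin N → ℝ) :
    dotN g (Lop α Γ P f) =
      (1 / 4) * ∑ i, ∑ j, ∑ k, ∑ l,
        Γ i j k l * (P i * P j * Psi α (P k) * Psi α (P l)) *
        (f i / Real.sqrt (Rfun α P i) + f j / Real.sqrt (Rfun α P j)
          - f k / Real.sqrt (Rfun α P k) - f l / Real.sqrt (Rfun α P l)) *
        (g i / Real.sqrt (Rfun α P i) + g j / Real.sqrt (Rfun α P j)
          - g k / Real.sqrt (Rfun α P k) - g l / Real.sqrt (Rfun α P l)) := by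
  classical
  obtain ⟨hPrange, K, b, c, hK, hrel⟩ := hP
  obtain ⟨hΓ0, hΓs1, hΓs2, hΓcons⟩ := hΓ
  have hΨpos : ∀ i, 0 < Psi α (P i) := by
    intro i
    have h0 := (hPrange i).1
    have h1 : 0 < 1 - α * P i := by
      have h2 : α * P i < α * (1 / α) := mul_lt_mul_of_pos_left (hPrange i).2 hα0
      rw [mul_one_div, div_self hα0.ne'] at h2
      linarith
    have h2 : 0 < 1 + (1 - α) * P i := by nlinarith
    exact mul_pos (Real.rpow_pos_of_pos h1 _) (Real.rpow_pos_of_pos h2 _)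
  have hΨne : ∀ i, Psi α (P i) ≠ 0 := fun i => (hΨpos i).ne'
  have hRpos : ∀ i, 0 < Rfun α P i := by
    intro i
    have h0 := (hPrange i).1
    have h1 : 0 < 1 - α * P i := by
      have h2 : α * P i < α * (1 / α) := mul_lt_mul_of_pos_left (hPrange i).2 hα0
      rw [mul_one_div, div_self hα0.ne'] at h2
      linarith
    have h2 : 0 < 1 + (1 - α) * P i := by nlinarith
    exact mul_pos (mul_pos h0 h1) h2
  have hsne : ∀ i, Real.sqrt (Rfun α P i) ≠ 0 :=
    fun i => (Real.sqrt_pos.mpr (hRpos i)).ne'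
  -- key equilibrium identity
  have hkey : ∀ i j k l, Γ i j k l ≠ 0 →
      P k * P l * Psi α (P i) * Psi α (P j) = P i * P j * Psi α (P k) * Psi α (P l) := by
    intro i j k l hz
    obtain ⟨hmom, hen⟩ := hΓcons i j k l hz
    have hb : (∑ m, b m * p i m) + ∑ m, b m * p j m
        = (∑ m, b m * p k m) + ∑ m, b m * p l m := by
      rw [← Finset.sum_add_distrib, ← Finset.sum_add_distrib]
      exact Finset.sum_congr rfl fun m _ => by rw [← mul_add, ← mul_add, hmom m]
    have hexpmul : ∀ x y : ℝ, K * Real.exp x * (K * Real.exp y) = K * K * Real.exp (x + y) := by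
      intro x y; rw [Real.exp_add]; ring
    have hdiv : P i / Psi α (P i) * (P j / Psi α (P j))
        = P k / Psi α (P k) * (P l / Psi α (P l)) := by
      rw [hrel i, hrel j, hrel k, hrel l, hexpmul, hexpmul]
      congr 1
      rw [Real.exp_eq_exp]
      linear_combination (-1 : ℝ) * hb - c * hen
    rw [div_mul_div_comm, div_mul_div_comm,
      div_eq_div_iff (mul_ne_zero (hΨne i) (hΨne j)) (mul_ne_zero (hΨne k) (hΨne l))] at hdiv
    linear_combination -hdiv
  -- step 1: rewrite the left-hand side
  have step1 : dotN g (Lop α Γ P f) =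
      ∑ i, ∑ j, ∑ k, ∑ l,
        Γ i j k l * (P i * P j * Psi α (P k) * Psi α (P l)) *
          ((f i / Real.sqrt (Rfun α P i) + f j / Real.sqrt (Rfun α P j)
              - f k / Real.sqrt (Rfun α P k) - f l / Real.sqrt (Rfun α P l)) *
            (g i / Real.sqrt (Rfun α P i))) := by
    simp only [dotN, Lop, Finset.mul_sum]
    refine Finset.sum_congr rfl fun i _ => Finset.sum_congr rfl fun j _ =>
      Finset.sum_congr rfl fun k _ => Finset.sum_congr rfl fun l _ => ?_
    by_cases hz : Γ i j k l = 0
    · simp [hz]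
    · have e1 : Pcoef α P k l i j
          = P i * P j * Psi α (P k) * Psi α (P l) / Real.sqrt (Rfun α P k) := by
        unfold Pcoef; rw [hkey i j k l hz]
      have e2 : Pcoef α P l k i j
          = P i * P j * Psi α (P k) * Psi α (P l) / Real.sqrt (Rfun α P l) := by
        unfold Pcoef
        rw [show P l * P k * Psi α (P i) * Psi α (P j)
            = P k * P l * Psi α (P i) * Psi α (P j) by ring, hkey i j k l hz]
      rw [e1, e2]
      unfold Pcoef
      field_simp
  rw [step1]
  exact weak_form_abstract
    (fun i j k l => Γ i j k l * (P i * P j * Psi α (P k) * Psi α (P l)))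
    (fun i => f i / Real.sqrt (Rfun α P i)) (fun i => g i / Real.sqrt (Rfun α P i))
    (fun i j k l => by
      show Γ j i k l * (P j * P i * Psi α (P k) * Psi α (P l))
        = Γ i j k l * (P i * P j * Psi α (P k) * Psi α (P l))
      rw [← hΓs1 i j k l]; ring)
    (fun i j k l => by
      show Γ k l i j * (P k * P l * Psi α (P i) * Psi α (P j))
        = Γ i j k l * (P i * P j * Psi α (P k) * Psi α (P l))
      by_cases hz : Γ i j k l = 0
      · rw [← hΓs2 i j k l, hz]; ring
      · rw [← hΓs2 i j k l, hkey i j k l hz])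
end
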